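/- For every twice continuously differentiable matrix field A : ℝ³ → so(3) taking values in the skew-symmetric 3×3 matrices, the matrix Curl((Curl A)ᵀ) is skew-symmetric at every point of ℝ³. -/

import Mathlib

open Matrix

/-- Partial derivative in direction `j` of a scalar field on `ℝ³`. -/
noncomputable def pd (j : Fin 3) (f : (Fin 3 → ℝ) → ℝ) (x : Fin 3 → ℝ) : ℝ :=
  fderiv ℝ f x (Pi.single j 1)

/-- Gradient of a scalar field on `ℝ³`. -/
noncomputable def grad3 (f : (Fin 3 → ℝ) → ℝ) (x : Fin 3 → ℝ) : Fin 3 → ℝ :=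
  fun i => pd i f x

/-- Classical curl of a vector field on `ℝ³`. -/
noncomputable def vcurl (v : (Fin 3 → ℝ) → Fin 3 → ℝ) (x : Fin 3 → ℝ) : Fin 3 → ℝ :=
  ![pd 1 (fun y => v y 2) x - pd 2 (fun y => v y 1) x,
    pd 2 (fun y => v y 0) x - pd 0 (fun y => v y 2) x,
    pd 0 (fun y => v y 1) x - pd 1 (fun y => v y 0) x]

/-- Divergence of a vector field on `ℝ³`. -/
noncomputable def vdiv (v : (Fin 3 → ℝ) → Fin 3 → ℝ) (x : Fin 3 → ℝ) : ℝ :=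
  ∑ i, pd i (fun y => v y i) x

/-- Row-wise Curl of a matrix field on `ℝ³`: the `i`-th row of `mCurl P`
is the curl of the `i`-th row of `P`. -/
noncomputable def mCurl (P : (Fin 3 → ℝ) → Matrix (Fin 3) (Fin 3) ℝ) (x : Fin 3 → ℝ) :
    Matrix (Fin 3) (Fin 3) ℝ :=
  Matrix.of fun i j => vcurl (fun y => P y i) x j

/-- Jacobian matrix of a vector field on `ℝ³`. -/
noncomputable def jac (v : (Fin 3 → ℝ) → Fin 3 → ℝ) (x : Fin 3 → ℝ) :
    Matrix (Fin 3) (Fin 3) ℝ :=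
  Matrix.of fun i j => pd j (fun y => v y i) x

/-- Axial vector of a (skew-symmetric) `3 × 3` matrix: with `A 1 2 = -a₁`,
`A 2 0 = -a₂`, `A 0 1 = -a₃` (so `A 2 1 = a₁`, `A 0 2 = a₂`, `A 1 0 = a₃`). -/
def axl (A : Matrix (Fin 3) (Fin 3) ℝ) : Fin 3 → ℝ :=
  ![A 2 1, A 0 2, A 1 0]

/-- The skew-symmetric matrix `anti a` characterized by `(anti a) ⬝ v = a × v`. -/
def antiM (a : Fin 3 → ℝ) : Matrix (Fin 3) (Fin 3) ℝ :=
  !![0, -a 2, a 1; a 2, 0, -a 0; -a 1, a 0, 0]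

/-- Symmetric part of a matrix. -/
noncomputable def symM (X : Matrix (Fin 3) (Fin 3) ℝ) : Matrix (Fin 3) (Fin 3) ℝ :=
  (1 / 2 : ℝ) • (X + Xᵀ)

/-- Skew-symmetric part of a matrix. -/
noncomputable def skewM (X : Matrix (Fin 3) (Fin 3) ℝ) : Matrix (Fin 3) (Fin 3) ℝ :=
  (1 / 2 : ℝ) • (X - Xᵀ)

/-- Deviatoric (trace-free) part of a matrix. -/
noncomputable def devM (X : Matrix (Fin 3) (Fin 3) ℝ) : Matrix (Fin 3) (Fin 3) ℝ :=
  X - (Matrix.trace X / 3) • (1 : Matrix (Fin 3) (Fin 3) ℝ)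

/-- Frobenius inner product `⟨X, Y⟩ = tr (X Yᵀ)`. -/
noncomputable def minner (X Y : Matrix (Fin 3) (Fin 3) ℝ) : ℝ :=
  Matrix.trace (X * Yᵀ)

/-- Squared Frobenius norm. -/
noncomputable def mnormSq (X : Matrix (Fin 3) (Fin 3) ℝ) : ℝ :=
  minner X X

/-- Squared Euclidean norm of a vector in `ℝ³`. -/
def vnormSq (v : Fin 3 → ℝ) : ℝ :=
  ∑ i, (v i) ^ 2


lemma pd_contDiff_one {f : (Fin 3 → ℝ) → ℝ} (hf : ContDiff ℝ 2 f) (j : Fin 3) :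
    ContDiff ℝ 1 (pd j f) :=
  (hf.fderiv_right (m := 1) (by norm_num)).clm_apply contDiff_const

lemma pd_sub {f g : (Fin 3 → ℝ) → ℝ} (hf : Differentiable ℝ f) (hg : Differentiable ℝ g)
    (j : Fin 3) (x : Fin 3 → ℝ) :
    pd j (fun y => f y - g y) x = pd j f x - pd j g x := by
  unfold pd
  rw [fderiv_fun_sub (hf x) (hg x)]
  rfl

lemma pd_neg (f : (Fin 3 → ℝ) → ℝ) (j : Fin 3) (x : Fin 3 → ℝ) :
    pd j (fun y => -f y) x = -pd j f x := by
  unfold pd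
  rw [fderiv_fun_neg]
  rfl

lemma pd_comm {f : (Fin 3 → ℝ) → ℝ} (hf : ContDiff ℝ 2 f) (i j : Fin 3) (x : Fin 3 → ℝ) :
    pd i (pd j f) x = pd j (pd i f) x := by
  have hf' : ∀ y, HasFDerivAt f (fderiv ℝ f y) y := fun y =>
    (hf.differentiable (by norm_num) y).hasFDerivAt
  have h2 : DifferentiableAt ℝ (fderiv ℝ f) x :=
    ((hf.fderiv_right (m := 1) le_rfl).differentiable (by norm_num)) x
  have hsymm := second_derivative_symmetric hf' h2.hasFDerivAt (Pi.single i 1) (Pi.single j 1)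
  have key : ∀ (c : Fin 3 → ℝ) (v : Fin 3 → ℝ),
      fderiv ℝ (fun y => fderiv ℝ f y c) x v = fderiv ℝ (fderiv ℝ f) x v c := by
    intro c v
    rw [fderiv_clm_apply h2 (differentiableAt_const c)]
    simp
  show fderiv ℝ (fun y => fderiv ℝ f y (Pi.single j 1)) x (Pi.single i 1)
      = fderiv ℝ (fun y => fderiv ℝ f y (Pi.single i 1)) x (Pi.single j 1)
  rw [key, key]
  exact hsymm

lemma vcurl_apply (v : (Fin 3 → ℝ) → Fin 3 → ℝ) (x : Fin 3 → ℝ) (i : Fin 3) :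
    vcurl v x i = pd (i+1) (fun y => v y (i+2)) x - pd (i+2) (fun y => v y (i+1)) x := by
  fin_cases i <;> simp [vcurl]

/-- For a skew-symmetric matrix field A, the matrix Curl((Curl A)ᵀ) is
skew-symmetric. -/
theorem curl_curl_transpose_skew
    (A : (Fin 3 → ℝ) → Matrix (Fin 3) (Fin 3) ℝ)
    (hA_skew : ∀ x, (A x)ᵀ = -(A x))
    (hA_diff : ∀ i j, ContDiff ℝ 2 (fun y => A y i j)) :
    ∀ x : Fin 3 → ℝ,
      (mCurl (fun y => (mCurl A y)ᵀ) x)ᵀ = -(mCurl (fun y => (mCurl A y)ᵀ) x) := by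
  intro x
  have hskew : ∀ (y : Fin 3 → ℝ) (a b : Fin 3), A y a b = -A y b a := by
    intro y a b
    have := congrFun (congrFun (hA_skew y) b) a
    simpa [Matrix.transpose_apply] using this.symm |>.symm
  have hd1 : ∀ (j a b : Fin 3), Differentiable ℝ (pd j (fun y => A y a b)) :=
    fun j a b => (pd_contDiff_one (hA_diff a b) j).differentiable (by norm_num)
  have hDcomm : ∀ (p q a b : Fin 3),
      pd p (pd q (fun y => A y a b)) x = pd q (pd p (fun y => A y a b)) x :=
    fun p q a b => pd_comm (hA_diff a b) p q x
  have hDskew : ∀ (p q a b : Fin 3),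
      pd p (pd q (fun y => A y a b)) x = -pd p (pd q (fun y => A y b a)) x := by
    intro p q a b
    have h1 : (fun y => A y a b) = fun y => -A y b a := funext fun y => hskew y a b
    have h2 : pd q (fun y => A y a b) = fun z => -pd q (fun y => A y b a) z := by
      funext z
      rw [h1, pd_neg]
    rw [h2, pd_neg]
  have hM : ∀ i j : Fin 3, mCurl (fun y => (mCurl A y)ᵀ) x i j =
      pd (j+1) (pd (i+1) (fun y => A y (j+2) (i+2))) x
      - pd (j+1) (pd (i+2) (fun y => A y (j+2) (i+1))) x
      - pd (j+2) (pd (i+1) (fun y => A y (j+1) (i+2))) x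
      + pd (j+2) (pd (i+2) (fun y => A y (j+1) (i+1))) x := by
    intro i j
    have e1 : mCurl (fun y => (mCurl A y)ᵀ) x i j
        = vcurl (fun y => (mCurl A y)ᵀ i) x j := rfl
    have eB : ∀ k : Fin 3, (fun y => (mCurl A y)ᵀ i k)
        = fun y => pd (i+1) (fun z => A z k (i+2)) y - pd (i+2) (fun z => A z k (i+1)) y := by
      intro k; funext y
      show vcurl (fun z => A z k) y i = _
      rw [vcurl_apply]
    rw [e1, vcurl_apply]
    simp only [eB]
    rw [pd_sub (hd1 _ _ _) (hd1 _ _ _), pd_sub (hd1 _ _ _) (hd1 _ _ _)]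
    ring
  ext i j
  simp only [Matrix.transpose_apply, Matrix.neg_apply]
  rw [hM i j, hM j i]
  rw [show pd (i+1) (pd (j+1) (fun y => A y (i+2) (j+2))) x
      = -pd (j+1) (pd (i+1) (fun y => A y (j+2) (i+2))) x by rw [hDcomm, hDskew]]
  rw [show pd (i+1) (pd (j+2) (fun y => A y (i+2) (j+1))) x
      = -pd (j+2) (pd (i+1) (fun y => A y (j+1) (i+2))) x by rw [hDcomm, hDskew]]
  rw [show pd (i+2) (pd (j+1) (fun y => A y (i+1) (j+2))) x
      = -pd (j+1) (pd (i+2) (fun y => A y (j+2) (i+1))) x by rw [hDcomm, hDskew]]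
  rw [show pd (i+2) (pd (j+2) (fun y => A y (i+1) (j+1))) x
      = -pd (j+2) (pd (i+2) (fun y => A y (j+1) (i+1))) x by rw [hDcomm, hDskew]]
  ring
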